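/- Fix x ≥ 0 and γ ∈ ℝ. Then solutions diverge at x as w₀ → ±∞: for every C ∈ ℝ there exists W ∈ ℝ such that for all w₀ ≥ W, every solution w with parameters (w₀,γ) satisfies w(x) > C; and for every C ∈ ℝ there exists W′ ∈ ℝ such that for all w₀ ≤ W′, every solution w with parameters (w₀,γ) satisfies w(x) < C. -/

import Mathlib

open Set MeasureTheory Filter Topology

/-- `piU U c w = min_{μ ∈ U} (μ·w + c(μ))`, realized as an infimum. -/
noncomputable def piU (U : Set ℝ) (c : ℝ → ℝ) (w : ℝ) : ℝ :=
  sInf ((fun μ => μ * w + c μ) '' U)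

/-- `w` is a continuously differentiable solution on `[0,∞)` of
`(σ²/2)·w′(x) + π(w(x)) + h(x) = γ` with `w(0) = w₀`, with derivative `w'`. -/
def IsSolution (σ : ℝ) (U : Set ℝ) (c h : ℝ → ℝ) (w₀ γ : ℝ) (w w' : ℝ → ℝ) : Prop :=
  w 0 = w₀ ∧ ContinuousOn w' (Set.Ici 0) ∧
  (∀ x ∈ Set.Ici (0:ℝ), HasDerivWithinAt w (w' x) (Set.Ici 0) x) ∧
  (∀ x ∈ Set.Ici (0:ℝ), σ ^ 2 / 2 * w' x + piU U c (w x) + h x = γ)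

lemma key_lemma (a b L x : ℝ) (ha : 0 ≤ a) (hb : 0 < b) (hL : 0 ≤ L) (hx : 0 ≤ x)
    (f f' : ℝ → ℝ)
    (hderiv : ∀ t ∈ Set.Icc 0 x, HasDerivWithinAt f (f' t) (Set.Icc 0 x) t)
    (hbound : ∀ t ∈ Set.Icc 0 x, 0 ≤ f t → -a - b * f t ≤ f' t)
    (h0 : Real.exp (b * x) * L + a / b * (Real.exp (b * x) - 1) < f 0) :
    L < f x := by
  by_contra hfx
  push_neg at hfx
  have hfc : ContinuousOn f (Set.Icc 0 x) := fun t ht => (hderiv t ht).continuousWithinAt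
  set S : Set ℝ := Set.Icc 0 x ∩ f ⁻¹' (Set.Iic L) with hS
  have hSne : S.Nonempty := ⟨x, ⟨hx, le_refl x⟩, hfx⟩
  have hSbdd : BddBelow S := ⟨0, fun t ht => ht.1.1⟩
  have hScl : IsClosed S := hfc.preimage_isClosed_of_isClosed isClosed_Icc isClosed_Iic
  set t₀ := sInf S with ht₀
  have ht₀S : t₀ ∈ S := hScl.csInf_mem hSne hSbdd
  have ht₀0 : 0 ≤ t₀ := ht₀S.1.1
  have ht₀x : t₀ ≤ x := ht₀S.1.2
  have hft₀ : f t₀ ≤ L := ht₀S.2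
  have hlt : ∀ t, 0 ≤ t → t < t₀ → L < f t := by
    intro t ht0 htlt
    by_contra hle
    push_neg at hle
    exact absurd (csInf_le hSbdd ⟨⟨ht0, htlt.le.trans ht₀x⟩, hle⟩) (not_le.2 htlt)
  set u : ℝ → ℝ := fun t => Real.exp (b * t) * f t + a / b * (Real.exp (b * t) - 1) with hu
  have hderiv' : ∀ t ∈ Set.Ioo 0 t₀,
      HasDerivAt u (Real.exp (b * t) * b * f t + Real.exp (b * t) * f' t
        + a / b * (Real.exp (b * t) * b)) t := by
    intro t ht
    have htx : t ∈ Set.Icc 0 x := ⟨ht.1.le, (ht.2.le.trans ht₀x)⟩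
    have hnh : Set.Icc (0:ℝ) x ∈ nhds t := Icc_mem_nhds ht.1 (lt_of_lt_of_le ht.2 ht₀x)
    have hfd : HasDerivAt f (f' t) t := (hderiv t htx).hasDerivAt hnh
    have he : HasDerivAt (fun t : ℝ => Real.exp (b * t)) (Real.exp (b * t) * b) t := by
      simpa using ((hasDerivAt_id t).const_mul b).exp
    exact (he.mul hfd).add (((he.sub_const 1).const_mul (a / b)))
  have hmono : MonotoneOn u (Set.Icc 0 t₀) := by
    apply monotoneOn_of_deriv_nonneg (convex_Icc 0 t₀)
    · apply ContinuousOn.add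
      · exact ((Real.continuous_exp.comp (continuous_const.mul continuous_id)).continuousOn).mul
          (hfc.mono (Icc_subset_Icc le_rfl ht₀x))
      · exact continuousOn_const.mul
          (((Real.continuous_exp.comp (continuous_const.mul continuous_id)).sub
            continuous_const).continuousOn)
    · intro t ht
      rw [interior_Icc] at ht
      exact (hderiv' t ht).differentiableAt.differentiableWithinAt
    · intro t ht
      rw [interior_Icc] at ht
      rw [(hderiv' t ht).deriv]
      have htx : t ∈ Set.Icc 0 x := ⟨ht.1.le, (ht.2.le.trans ht₀x)⟩
      have hft : 0 ≤ f t := hL.trans (hlt t ht.1.le ht.2).le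
      have hb' := hbound t htx hft
      have hexp := (Real.exp_pos (b * t)).le
      have h1 : 0 ≤ b * f t + f' t + a := by linarith
      have h2 : a / b * (Real.exp (b * t) * b) = a * Real.exp (b * t) := by
        field_simp
      rw [h2]
      nlinarith [mul_nonneg hexp h1]
  have hu0 : u 0 ≤ u t₀ := hmono ⟨le_rfl, ht₀0⟩ ⟨ht₀0, le_rfl⟩ ht₀0
  have hu0' : u 0 = f 0 := by simp [hu]
  have hexpm : Real.exp (b * t₀) ≤ Real.exp (b * x) :=
    Real.exp_le_exp.2 (mul_le_mul_of_nonneg_left ht₀x hb.le)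
  have hexp1 : (1:ℝ) ≤ Real.exp (b * t₀) := by
    rw [← Real.exp_zero]; exact Real.exp_le_exp.2 (mul_nonneg hb.le ht₀0)
  have hab : 0 ≤ a / b := div_nonneg ha hb.le
  have hexpt : 0 < Real.exp (b * t₀) := Real.exp_pos _
  have hfin : u t₀ ≤ Real.exp (b * x) * L + a / b * (Real.exp (b * x) - 1) := by
    have h1 : Real.exp (b * t₀) * f t₀ ≤ Real.exp (b * t₀) * L :=
      mul_le_mul_of_nonneg_left hft₀ hexpt.le
    nlinarith
  rw [hu0'] at hu0
  exact absurd (hu0.trans hfin) (not_le.2 h0)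

theorem stmt_8 (σ : ℝ) (hσ : 0 < σ) (U : Set ℝ) (hUne : U.Nonempty) (hUcpt : IsCompact U)
    (c : ℝ → ℝ) (hc : Continuous c) (h : ℝ → ℝ)
    (hhcont : ContinuousOn h (Set.Ici 0)) (hhmono : StrictMonoOn h (Set.Ici 0))
    (hh0 : h 0 = 0) (hhtop : Filter.Tendsto h Filter.atTop Filter.atTop)
    (γ x : ℝ) (hx : 0 ≤ x) :
    (∀ C : ℝ, ∃ W : ℝ, ∀ w₀ : ℝ, W ≤ w₀ → ∀ w w' : ℝ → ℝ,
      IsSolution σ U c h w₀ γ w w' → C < w x) ∧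
    (∀ C : ℝ, ∃ W' : ℝ, ∀ w₀ : ℝ, w₀ ≤ W' → ∀ w w' : ℝ → ℝ,
      IsSolution σ U c h w₀ γ w w' → w x < C) := by
  obtain ⟨r, hr⟩ := hUcpt.isBounded.subset_closedBall 0
  have hM : ∀ μ ∈ U, |μ| ≤ r := by
    intro μ hμ
    simpa [Real.dist_eq] using hr hμ
  obtain ⟨μm, hμmU, hμm⟩ := hUcpt.exists_isMinOn hUne hc.continuousOn
  have hμm' : ∀ μ ∈ U, c μm ≤ c μ := fun μ hμ => hμm hμ
  have hr0 : 0 ≤ r := (abs_nonneg μm).trans (hM μm hμmU)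
  have hσ2 : (0:ℝ) < σ ^ 2 := by positivity
  set K : ℝ := |γ| + |c μm| + |h x| with hK_def
  have hK : 0 ≤ K := by positivity
  set a : ℝ := 2 / σ ^ 2 * K with ha_def
  set b : ℝ := 2 / σ ^ 2 * (r + 1) with hb_def
  have ha : 0 ≤ a := by positivity
  have hb : 0 < b := by positivity
  -- bounds on piU
  have hlb : ∀ v : ℝ, ∀ y ∈ (fun μ => μ * v + c μ) '' U, -(r * |v|) + c μm ≤ y := by
    rintro v y ⟨μ, hμ, rfl⟩
    have h1 : |μ * v| ≤ r * |v| := by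
      rw [abs_mul]
      exact mul_le_mul_of_nonneg_right (hM μ hμ) (abs_nonneg v)
    have h2 := hμm' μ hμ
    have h3 := neg_abs_le (μ * v)
    simp only
    linarith
  have hlow : ∀ v : ℝ, -(r * |v|) + c μm ≤ piU U c v := fun v =>
    le_csInf (hUne.image _) (hlb v)
  have hub : ∀ v : ℝ, piU U c v ≤ μm * v + c μm := fun v =>
    csInf_le ⟨-(r * |v|) + c μm, hlb v⟩ ⟨μm, hμmU, rfl⟩
  have hμmr : μm ≤ r := (le_abs_self μm).trans (hM μm hμmU)
  have hμmr' : -r ≤ μm := (neg_le_neg (hM μm hμmU)).trans (neg_abs_le μm)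
  have hhm := hhmono.monotoneOn
  have hht : ∀ t, 0 ≤ t → t ≤ x → 0 ≤ h t ∧ h t ≤ h x := by
    intro t ht0 htx
    constructor
    · have := hhm self_mem_Ici (mem_Ici.2 ht0) ht0
      linarith [hh0 ▸ this]
    · exact hhm (mem_Ici.2 ht0) (mem_Ici.2 hx) htx
  have hhalf : (0:ℝ) < σ ^ 2 / 2 := by positivity
  constructor
  · -- w₀ → +∞
    intro C
    set L : ℝ := max C 0 with hL_def
    refine ⟨Real.exp (b * x) * L + a / b * (Real.exp (b * x) - 1) + 1, ?_⟩
    rintro w₀ hW w w' ⟨hw0, hwc, hwd, heq⟩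
    have hkey := key_lemma a b L x ha hb (le_max_right C 0) hx w w'
      (fun t ht => (hwd t ht.1).mono Icc_subset_Ici_self)
      (by
        intro t ht hwt
        have heqt := heq t ht.1
        have hP := hub (w t)
        have hh1 := hht t ht.1 ht.2
        have e1 : σ ^ 2 / 2 * (-a - b * w t) = -K - (r + 1) * w t := by
          rw [ha_def, hb_def]; field_simp
        have h1 : σ ^ 2 / 2 * (-a - b * w t) ≤ σ ^ 2 / 2 * w' t := by
          rw [e1]
          have hμw : μm * w t ≤ r * w t := mul_le_mul_of_nonneg_right hμmr hwt
          have hγ : -|γ| ≤ γ := neg_abs_le γ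
          have hcμ : c μm ≤ |c μm| := le_abs_self _
          have hhx : h x ≤ |h x| := le_abs_self _
          rw [hK_def]
          nlinarith
        exact le_of_mul_le_mul_left (by linarith) hhalf)
      (by rw [hw0]; linarith)
    exact lt_of_le_of_lt (le_max_left C 0) hkey
  · -- w₀ → -∞
    intro C
    set L : ℝ := max (-C) 0 with hL_def
    refine ⟨-(Real.exp (b * x) * L + a / b * (Real.exp (b * x) - 1) + 1), ?_⟩
    rintro w₀ hW w w' ⟨hw0, hwc, hwd, heq⟩
    have hkey := key_lemma a b L x ha hb (le_max_right (-C) 0) hx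
      (fun t => -(w t)) (fun t => -(w' t))
      (fun t ht => ((hwd t ht.1).mono Icc_subset_Ici_self).neg)
      (by
        intro t ht hwt
        have hwt' : w t ≤ 0 := by linarith
        have heqt := heq t ht.1
        have hP := hlow (w t)
        have habs : |w t| = -(w t) := abs_of_nonpos hwt'
        rw [habs] at hP
        have hh1 := hht t ht.1 ht.2
        have e1 : σ ^ 2 / 2 * (a + b * -(w t)) = K + (r + 1) * -(w t) := by
          rw [ha_def, hb_def]; field_simp
        have h1 : σ ^ 2 / 2 * w' t ≤ σ ^ 2 / 2 * (a + b * -(w t)) := by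
          rw [e1]
          have hγ : γ ≤ |γ| := le_abs_self γ
          have hcμ : -|c μm| ≤ c μm := neg_abs_le _
          have hhx : (0:ℝ) ≤ |h x| := abs_nonneg _
          rw [hK_def]
          nlinarith
        have h2 : w' t ≤ a + b * -(w t) := le_of_mul_le_mul_left (by linarith) hhalf
        linarith)
      (by rw [hw0]; linarith)
    have : -C ≤ L := le_max_left (-C) 0
    linarith
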